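/- Let D be a commutative ring in which SL(2,D) is generated by elementary matrices. If the ideal of D generated by the elements u²−1, where u runs over the units of D, equals all of D, then the abelianization of SL(2,D) is trivial. -/

import Mathlib

open Matrix

section Aux

variable {D : Type*} [CommRing D]

private def eU (a : D) : Matrix.SpecialLinearGroup (Fin 2) D :=
  ⟨!![1, a; 0, 1], by simp [Matrix.det_fin_two_of]⟩

private def eL (a : D) : Matrix.SpecialLinearGroup (Fin 2) D :=
  ⟨!![1, 0; a, 1], by simp [Matrix.det_fin_two_of]⟩

private def dU (u : Dˣ) : Matrix.SpecialLinearGroup (Fin 2) D :=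
  ⟨!![(u : D), 0; 0, ((u⁻¹ : Dˣ) : D)], by simp [Matrix.det_fin_two_of]⟩

private def wU : Matrix.SpecialLinearGroup (Fin 2) D :=
  ⟨!![0, 1; -1, 0], by simp [Matrix.det_fin_two_of]⟩

private lemma eU_mul (a b : D) : eU a * eU b = eU (a + b) := by
  apply Subtype.ext
  rw [Matrix.SpecialLinearGroup.coe_mul]
  simp [eU, Matrix.SpecialLinearGroup.coe_mul, Matrix.mul_fin_two, add_comm]

private lemma dU_eU (u : Dˣ) (a : D) : dU u * eU a = eU ((u : D) ^ 2 * a) * dU u := by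
  apply Subtype.ext
  rw [Matrix.SpecialLinearGroup.coe_mul, Matrix.SpecialLinearGroup.coe_mul]
  have key : (u : D) ^ 2 * a * ((u⁻¹ : Dˣ) : D) = (u : D) * a := by
    have hu : (u : D) * ((u⁻¹ : Dˣ) : D) = 1 := by simp
    calc (u : D) ^ 2 * a * ((u⁻¹ : Dˣ) : D) = (u : D) * a * ((u : D) * ((u⁻¹ : Dˣ) : D)) := by ring
    _ = (u : D) * a := by rw [hu, mul_one]
  ext i j
  fin_cases i <;> fin_cases j <;>
    simp [dU, eU, Matrix.mul_apply, Fin.sum_univ_two, key]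

private lemma wU_eU (a : D) : wU * eU a = eL (-a) * wU := by
  apply Subtype.ext
  rw [Matrix.SpecialLinearGroup.coe_mul, Matrix.SpecialLinearGroup.coe_mul]
  simp [wU, eU, eL, Matrix.SpecialLinearGroup.coe_mul, Matrix.mul_fin_two]

end Aux

theorem abelianization_trivial_of_unit_ideal {D : Type*} [CommRing D]
    (hgen : Subgroup.closure {A : Matrix.SpecialLinearGroup (Fin 2) D |
      ∃ a : D, (A : Matrix (Fin 2) (Fin 2) D) = !![1, a; 0, 1] ∨
        (A : Matrix (Fin 2) (Fin 2) D) = !![1, 0; a, 1]} = ⊤)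
    (hb : Ideal.span {x : D | ∃ u : Dˣ, x = (u : D) ^ 2 - 1} = ⊤) :
    Subsingleton (Abelianization (Matrix.SpecialLinearGroup (Fin 2) D)) := by
  set G := Matrix.SpecialLinearGroup (Fin 2) D
  let f : G →* Abelianization G := Abelianization.of
  have feU_add : ∀ a b : D, f (eU (a + b)) = f (eU a) * f (eU b) := by
    intro a b; rw [← eU_mul, _root_.map_mul]
  have feU_zero : f (eU (0 : D)) = 1 := by
    have : eU (0 : D) = (1 : G) := by
      apply Subtype.ext
      simp [eU, Matrix.SpecialLinearGroup.coe_one, Matrix.one_fin_two]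
    rw [this, _root_.map_one]
  have hconj : ∀ (u : Dˣ) (a : D), f (eU ((u : D) ^ 2 * a)) = f (eU a) := by
    intro u a
    have h := congrArg f (dU_eU u a)
    rw [_root_.map_mul, _root_.map_mul] at h
    rw [mul_comm (f (eU ((u : D) ^ 2 * a))) (f (dU u))] at h
    exact (mul_left_cancel h).symm
  have feU_neg : ∀ a : D, f (eU (-a)) = (f (eU a))⁻¹ := by
    intro a
    rw [eq_inv_iff_mul_eq_one, ← feU_add]
    simpa using feU_zero
  -- the ideal of x such that f (eU (x * c)) = 1 for all c
  let I : Ideal D :=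
    { carrier := {x : D | ∀ c : D, f (eU (x * c)) = 1}
      add_mem' := by
        intro x y hx hy c
        rw [add_mul, feU_add, hx c, hy c, mul_one]
      zero_mem' := by intro c; simpa using feU_zero
      smul_mem' := by
        intro r x hx c
        have := hx (r * c)
        rwa [show x * (r * c) = r • x * c by rw [smul_eq_mul]; ring] at this }
  have hspan : Ideal.span {x : D | ∃ u : Dˣ, x = (u : D) ^ 2 - 1} ≤ I := by
    rw [Ideal.span_le]
    rintro x ⟨u, rfl⟩ c
    have : ((u : D) ^ 2 - 1) * c = (u : D) ^ 2 * c + (-c) := by ring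
    rw [this, feU_add, hconj u c, feU_neg, mul_inv_cancel]
  have hItop : I = ⊤ := top_le_iff.mp (hb ▸ hspan)
  have feU : ∀ a : D, f (eU a) = 1 := by
    intro a
    have h1 : (1 : D) ∈ I := hItop ▸ Submodule.mem_top
    simpa using h1 a
  have feL : ∀ a : D, f (eL a) = 1 := by
    intro a
    have h := congrArg f (wU_eU (-a))
    rw [_root_.map_mul, _root_.map_mul, neg_neg, feU, mul_one] at h
    exact right_eq_mul.mp h
  -- generators map to 1
  have hgen1 : ∀ A : G, f A = 1 := by
    have hsub : {A : G |
        ∃ a : D, (A : Matrix (Fin 2) (Fin 2) D) = !![1, a; 0, 1] ∨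
          (A : Matrix (Fin 2) (Fin 2) D) = !![1, 0; a, 1]} ⊆ (f.ker : Set G) := by
      rintro A ⟨a, hA | hA⟩
      · have : A = eU a := Subtype.ext hA
        simpa [MonoidHom.mem_ker, this] using feU a
      · have : A = eL a := Subtype.ext hA
        simpa [MonoidHom.mem_ker, this] using feL a
    intro A
    have : A ∈ Subgroup.closure {A : G |
        ∃ a : D, (A : Matrix (Fin 2) (Fin 2) D) = !![1, a; 0, 1] ∨
          (A : Matrix (Fin 2) (Fin 2) D) = !![1, 0; a, 1]} := hgen ▸ Subgroup.mem_top A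
    exact (Subgroup.closure_le _ |>.mpr hsub) this
  -- conclude
  have hsurj : Function.Surjective f := fun x => Quotient.inductionOn' x fun g => ⟨g, rfl⟩
  refine subsingleton_of_forall_eq 1 ?_
  intro x
  obtain ⟨A, rfl⟩ := hsurj x
  exact hgen1 A
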